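/- Let Q(λ) = A_4 λ⁴ + A_3 λ³ + A_2 λ² + A_1 λ + A_0 be a random real quartic polynomial whose coefficients A_0, …, A_4 are i.i.d. standard normal random variables. Then the probability r_4 = P(N⁻(Q) = 4) that all four complex roots of Q have negative real part satisfies r_4 < 1/32. -/

import Mathlib

open Polynomial MeasureTheory ProbabilityTheory
open scoped ENNReal

/-- The number of complex roots, counted with multiplicity, of a real polynomial
that have negative real part. -/
noncomputable def negRootCount (q : Polynomial ℝ) : ℕ :=
  Multiset.card ((q.map (algebraMap ℝ ℂ)).roots.filter fun z => z.re < 0)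

/-- The random real polynomial `∑_{i=0}^{n} ω_i λ^i` built from coefficients `ω`. -/
noncomputable def polyOfCoeffs {n : ℕ} (ω : Fin (n + 1) → ℝ) : Polynomial ℝ :=
  ∑ i : Fin (n + 1), Polynomial.C (ω i) * Polynomial.X ^ (i : ℕ)

namespace Stmt13Aux

/-! ### ENNReal arithmetic helpers -/

lemma enn1 : ((1:ℝ≥0∞)/2)^5 = 1/32 := by
  rw [one_div, one_div, ← ENNReal.inv_pow]
  congr 1
  norm_num

lemma enn2 : (1/64 : ℝ≥0∞) + 1/64 = 1/32 := by
  rw [one_div, one_div, ← two_mul]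
  have h64 : (64:ℝ≥0∞) = 2 * 32 := by norm_num
  rw [h64, ENNReal.mul_inv (Or.inl (by norm_num)) (Or.inl (by norm_num)), ← mul_assoc,
    ENNReal.mul_inv_cancel (by norm_num) (by norm_num), one_mul]

lemma enn3 (x : ℝ≥0∞) (h : x + x ≤ 1/32) : x ≤ 1/64 := by
  by_contra hlt
  push_neg at hlt
  have h2 : (1/32 : ℝ≥0∞) < x + x := by
    calc (1/32 : ℝ≥0∞) = 1/64 + 1/64 := enn2.symm
    _ < x + x := ENNReal.add_lt_add hlt hlt
  exact absurd h (not_le.2 h2)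

/-! ### Gaussian measure helpers -/

lemma gauss_map_neg : (gaussianReal 0 1).map (fun x : ℝ => -1 * x) = gaussianReal 0 1 := by
  rw [gaussianReal_map_const_mul (-1)]
  congr 1
  · norm_num
  · ext; norm_num

lemma gauss_Iio_eq_Ioi : gaussianReal 0 1 (Set.Iio 0) = gaussianReal 0 1 (Set.Ioi 0) := by
  conv_lhs => rw [← gauss_map_neg]
  rw [Measure.map_apply (by fun_prop) measurableSet_Iio]
  congr 1
  ext x
  simp only [Set.mem_preimage, Set.mem_Iio, Set.mem_Ioi]
  constructor <;> intro h <;> linarith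

lemma gauss_singleton : gaussianReal 0 1 ({0} : Set ℝ) = 0 :=
  gaussianReal_absolutelyContinuous 0 (by norm_num) (by simp)

lemma gauss_Ioi : gaussianReal 0 1 (Set.Ioi 0) = 1/2 := by
  have hunion : gaussianReal 0 1 (Set.Iio 0 ∪ Set.Ioi 0) = 1 := by
    rw [Set.Iio_union_Ioi]
    rw [measure_compl (measurableSet_singleton 0) (measure_ne_top _ _), gauss_singleton]
    simp
  rw [measure_union ((Set.Iio_disjoint_Ici le_rfl).mono_right Set.Ioi_subset_Ici_self)
    measurableSet_Ioi, gauss_Iio_eq_Ioi] at hunion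
  rw [ENNReal.eq_div_iff (by norm_num) (by norm_num), two_mul]
  exact hunion

lemma gauss_Iio : gaussianReal 0 1 (Set.Iio 0) = 1/2 := by
  rw [gauss_Iio_eq_Ioi, gauss_Ioi]

lemma gauss_Ioo {a b : ℝ} (hab : a < b) : gaussianReal 0 1 (Set.Ioo a b) ≠ 0 := by
  intro h
  have := gaussianReal_absolutelyContinuous' 0 (v := 1) (by norm_num) h
  rw [Real.volume_Ioo] at this
  simp [ENNReal.ofReal_eq_zero] at this
  linarith

/-! ### Polynomial helpers -/

lemma coeff_polyOfCoeffs (ω : Fin 5 → ℝ) (k : ℕ) :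
    (polyOfCoeffs (n := 4) ω).coeff k = if h : k < 5 then ω ⟨k, h⟩ else 0 := by
  classical
  rw [polyOfCoeffs, Polynomial.finset_sum_coeff]
  simp only [Polynomial.coeff_C_mul, Polynomial.coeff_X_pow, mul_ite, mul_one, mul_zero]
  split_ifs with h
  · rw [Finset.sum_eq_single (⟨k, h⟩ : Fin 5)] <;> simp +contextual [Fin.ext_iff, eq_comm]
  · apply Finset.sum_eq_zero; intro i _; rw [if_neg]; omega

lemma quad_of_pair (z w : ℂ) (hz : z.re < 0) (hw : w.re < 0)
    (hzw : (starRingEnd ℂ) z = w ∨ (z.im = 0 ∧ w.im = 0)) :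
    ∃ b c : ℝ, 0 < b ∧ 0 < c ∧
      (X - C z) * (X - C w) = X ^ 2 + C ((b : ℂ)) * X + C ((c : ℂ)) := by
  have hsum : ((-(z.re + w.re) : ℝ) : ℂ) = -(z + w) := by
    rcases hzw with h | ⟨h1, h2⟩
    · subst h
      simp [Complex.add_conj]
      push_cast
      ring
    · have hze : z = (z.re : ℂ) := Complex.ext rfl (by simp [h1])
      have hwe : w = (w.re : ℂ) := Complex.ext rfl (by simp [h2])
      push_cast
      rw [← hze, ← hwe]
  have hprodpos : ∃ c : ℝ, 0 < c ∧ ((c : ℝ) : ℂ) = z * w := by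
    rcases hzw with h | ⟨h1, h2⟩
    · refine ⟨Complex.normSq z, ?_, ?_⟩
      · have hz0 : z ≠ 0 := fun h0 => by simp [h0] at hz
        exact Complex.normSq_pos.2 hz0
      · rw [← h]; exact (Complex.mul_conj z).symm
    · refine ⟨z.re * w.re, mul_pos_of_neg_of_neg hz hw, ?_⟩
      have hze : z = (z.re : ℂ) := Complex.ext rfl (by simp [h1])
      have hwe : w = (w.re : ℂ) := Complex.ext rfl (by simp [h2])
      push_cast
      rw [← hze, ← hwe]
  obtain ⟨c, hc, hcz⟩ := hprodpos
  refine ⟨-(z.re + w.re), c, by nlinarith, hc, ?_⟩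
  rw [hcz, hsum, map_neg, map_add, map_mul]
  ring

lemma exists_quad (M : Multiset ℂ) (hcard : Multiset.card M = 2)
    (hconj : ∀ z, M.count ((starRingEnd ℂ) z) = M.count z)
    (hre : ∀ z ∈ M, z.re < 0) :
    ∃ b c : ℝ, 0 < b ∧ 0 < c ∧
      (M.map fun a => X - C a).prod = X ^ 2 + C ((b : ℂ)) * X + C ((c : ℂ)) := by
  classical
  obtain ⟨z, w, rfl⟩ := Multiset.card_eq_two.1 hcard
  have hz : z.re < 0 := hre z (by simp)
  have hw : w.re < 0 := hre w (by simp)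
  have hpair : (starRingEnd ℂ) z = w ∨ (z.im = 0 ∧ w.im = 0) := by
    by_cases hzim : z.im = 0
    · right
      refine ⟨hzim, ?_⟩
      have hmem : (starRingEnd ℂ) w ∈ ({z, w} : Multiset ℂ) := by
        rw [← Multiset.count_pos, hconj]
        simp [Multiset.count_pos]
      rcases Multiset.mem_cons.1 hmem with h | h
      · have : w = (starRingEnd ℂ) z := by
          rw [← h]; simp
        rw [this]
        simp [hzim]
      · have : (starRingEnd ℂ) w = w := Multiset.mem_singleton.1 h
        have := congrArg Complex.im this
        simp at this
        linarith [this]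
    · left
      have hmem : (starRingEnd ℂ) z ∈ ({z, w} : Multiset ℂ) := by
        rw [← Multiset.count_pos, hconj]
        simp [Multiset.count_pos]
      rcases Multiset.mem_cons.1 hmem with h | h
      · exfalso
        have := congrArg Complex.im h
        simp at this
        exact hzim (by linarith)
      · exact Multiset.mem_singleton.1 h
  obtain ⟨b, c, hb, hc, heq⟩ := quad_of_pair z w hz hw hpair
  exact ⟨b, c, hb, hc, by simpa using heq⟩

lemma exists_quadquad (M : Multiset ℂ) (hcard : Multiset.card M = 4)
    (hconj : ∀ z, M.count ((starRingEnd ℂ) z) = M.count z)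
    (hre : ∀ z ∈ M, z.re < 0) :
    ∃ b c d e : ℝ, 0 < b ∧ 0 < c ∧ 0 < d ∧ 0 < e ∧
      (M.map fun a => X - C a).prod =
        (X ^ 2 + C ((b : ℂ)) * X + C ((c : ℂ))) * (X ^ 2 + C ((d : ℂ)) * X + C ((e : ℂ))) := by
  classical
  by_cases hnr : ∃ z ∈ M, z.im ≠ 0
  · obtain ⟨z, hzM, hzim⟩ := hnr
    have hzconj : (starRingEnd ℂ) z ≠ z := by
      intro h
      have := congrArg Complex.im h
      simp at this
      exact hzim (by linarith)
    obtain ⟨M', rfl⟩ := Multiset.exists_cons_of_mem hzM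
    have hconjmem : (starRingEnd ℂ) z ∈ M' := by
      have h1 := hconj z
      rw [Multiset.count_cons, Multiset.count_cons] at h1
      rw [if_neg hzconj, if_pos rfl] at h1
      rw [← Multiset.count_pos]
      omega
    obtain ⟨M'', rfl⟩ := Multiset.exists_cons_of_mem hconjmem
    have hcard'' : Multiset.card M'' = 2 := by
      simp at hcard; omega
    have hconj'' : ∀ w, M''.count ((starRingEnd ℂ) w) = M''.count w := by
      intro w
      have h1 := hconj w
      simp only [Multiset.count_cons] at h1
      have e1 : ((starRingEnd ℂ) w = z) ↔ (w = (starRingEnd ℂ) z) := by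
        constructor
        · intro h; rw [← h]; simp
        · intro h; rw [h]; simp
      have e2 : ((starRingEnd ℂ) w = (starRingEnd ℂ) z) ↔ (w = z) :=
        ⟨fun h => (starRingEnd ℂ).injective h, fun h => by rw [h]⟩
      by_cases hw1 : w = z <;> by_cases hw2 : w = (starRingEnd ℂ) z <;>
        simp [hw1, hw2, e1, e2, hzconj, Ne.symm hzconj] at h1 ⊢ <;> omega
    have hre'' : ∀ w ∈ M'', w.re < 0 := fun w hw =>
      hre w (Multiset.mem_cons_of_mem (Multiset.mem_cons_of_mem hw))
    obtain ⟨d, e, hd, he, heq2⟩ := exists_quad M'' hcard'' hconj'' hre''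
    have hzre : z.re < 0 := hre z (Multiset.mem_cons_self _ _)
    have hczre : ((starRingEnd ℂ) z).re < 0 := by simpa using hzre
    obtain ⟨b, c, hb, hc, heq1⟩ := quad_of_pair z ((starRingEnd ℂ) z) hzre hczre (Or.inl rfl)
    refine ⟨b, c, d, e, hb, hc, hd, he, ?_⟩
    simp only [Multiset.map_cons, Multiset.prod_cons]
    rw [← heq2, ← heq1]
    ring
  · push_neg at hnr
    obtain ⟨z1, hz1⟩ := Multiset.card_pos_iff_exists_mem.1 (show 0 < Multiset.card M by omega)
    obtain ⟨M1, rfl⟩ := Multiset.exists_cons_of_mem hz1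
    obtain ⟨z2, hz2⟩ := Multiset.card_pos_iff_exists_mem.1
      (show 0 < Multiset.card M1 by simp at hcard; omega)
    obtain ⟨M2, rfl⟩ := Multiset.exists_cons_of_mem hz2
    obtain ⟨z3, hz3⟩ := Multiset.card_pos_iff_exists_mem.1
      (show 0 < Multiset.card M2 by simp at hcard; omega)
    obtain ⟨M3, rfl⟩ := Multiset.exists_cons_of_mem hz3
    obtain ⟨z4, hz4⟩ := Multiset.card_pos_iff_exists_mem.1
      (show 0 < Multiset.card M3 by simp at hcard; omega)
    obtain ⟨M4, rfl⟩ := Multiset.exists_cons_of_mem hz4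
    have hM4 : M4 = 0 := by simpa using hcard
    subst hM4
    have m1 : z1 ∈ (z1 ::ₘ z2 ::ₘ z3 ::ₘ z4 ::ₘ 0 : Multiset ℂ) := by simp
    have m2 : z2 ∈ (z1 ::ₘ z2 ::ₘ z3 ::ₘ z4 ::ₘ 0 : Multiset ℂ) := by simp
    have m3 : z3 ∈ (z1 ::ₘ z2 ::ₘ z3 ::ₘ z4 ::ₘ 0 : Multiset ℂ) := by simp
    have m4 : z4 ∈ (z1 ::ₘ z2 ::ₘ z3 ::ₘ z4 ::ₘ 0 : Multiset ℂ) := by simp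
    obtain ⟨b, c, hb, hc, heq1⟩ := quad_of_pair z1 z2 (hre _ m1) (hre _ m2)
      (Or.inr ⟨hnr _ m1, hnr _ m2⟩)
    obtain ⟨d, e, hd, he, heq2⟩ := quad_of_pair z3 z4 (hre _ m3) (hre _ m4)
      (Or.inr ⟨hnr _ m3, hnr _ m4⟩)
    refine ⟨b, c, d, e, hb, hc, hd, he, ?_⟩
    simp only [Multiset.map_cons, Multiset.prod_cons, Multiset.map_zero, Multiset.prod_zero]
    rw [← heq1, ← heq2]
    ring

lemma incl (ω : Fin 5 → ℝ) (h : negRootCount (polyOfCoeffs (n := 4) ω) = 4) :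
    (∀ i, 0 < ω i * ω 4) ∧ ω 1 * ω 4 < ω 2 * ω 3 ∧ ω 0 * ω 3 < ω 1 * ω 2 := by
  classical
  set q : Polynomial ℝ := polyOfCoeffs (n := 4) ω with hq
  set Q : Polynomial ℂ := q.map (algebraMap ℝ ℂ) with hQ
  have h4 : 4 ≤ Multiset.card Q.roots := by
    rw [negRootCount] at h
    rw [← h]
    exact Multiset.card_le_card (Multiset.filter_le _ _)
  have hdq : q.natDegree ≤ 4 := by
    rw [Polynomial.natDegree_le_iff_coeff_eq_zero]
    intro m hm
    rw [coeff_polyOfCoeffs]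
    rw [dif_neg (by omega)]
  have hdQq : Q.natDegree ≤ q.natDegree := Polynomial.natDegree_map_le
  have hcard : Multiset.card Q.roots = 4 :=
    le_antisymm (le_trans (Polynomial.card_roots' Q) (le_trans hdQq hdq)) h4
  have hdQ : Q.natDegree = 4 :=
    le_antisymm (le_trans hdQq hdq) (le_trans h4 (Polynomial.card_roots' Q))
  have hcoeffQ : ∀ k, Q.coeff k = ((q.coeff k : ℝ) : ℂ) := fun k => Polynomial.coeff_map _ k
  have hω4 : ω 4 ≠ 0 := by
    intro h0
    have : q.natDegree ≤ 3 := by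
      rw [Polynomial.natDegree_le_iff_coeff_eq_zero]
      intro m hm
      rw [coeff_polyOfCoeffs]
      by_cases h5 : m < 5
      · rw [dif_pos h5]
        have : m = 4 := by omega
        subst this
        exact h0
      · rw [dif_neg h5]
    omega
  have hre : ∀ z ∈ Q.roots, z.re < 0 := by
    rw [← Multiset.filter_eq_self (p := fun z : ℂ => z.re < 0)]
    refine Multiset.eq_of_le_of_card_le (Multiset.filter_le _ _) ?_
    rw [negRootCount] at h
    rw [hcard, h]
  have hQconj : Q.map (starRingEnd ℂ) = Q := by
    ext k
    rw [Polynomial.coeff_map, hcoeffQ k]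
    exact Complex.conj_ofReal _
  have hsplits : Q.Splits := IsAlgClosed.splits Q
  have hrootsconj : Q.roots.map (starRingEnd ℂ) = Q.roots := by
    rw [← hsplits.roots_map (starRingEnd ℂ), hQconj]
  have hcount : ∀ z, Q.roots.count ((starRingEnd ℂ) z) = Q.roots.count z := by
    intro z
    conv_lhs => rw [← hrootsconj]
    exact Multiset.count_map_eq_count' _ _ (starRingEnd ℂ).injective z
  obtain ⟨b, c, d, e, hb, hc, hd, he, hprod⟩ := exists_quadquad Q.roots hcard hcount hre
  have hlead : Q.leadingCoeff = ((ω 4 : ℝ) : ℂ) := by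
    rw [Polynomial.leadingCoeff, hdQ, hcoeffQ, coeff_polyOfCoeffs]
    norm_num
    rfl
  have hfact : Polynomial.C Q.leadingCoeff * (Q.roots.map fun a => X - C a).prod = Q :=
    Polynomial.C_leadingCoeff_mul_prod_multiset_X_sub_C (hcard.trans hdQ.symm)
  rw [hlead, hprod] at hfact
  set R : Polynomial ℝ := Polynomial.C (ω 4) *
    ((X ^ 2 + C b * X + C c) * (X ^ 2 + C d * X + C e)) with hR
  have hmapR : R.map (algebraMap ℝ ℂ) = Q := by
    rw [← hfact, hR]
    simp only [Polynomial.map_mul, Polynomial.map_add, Polynomial.map_pow,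
      Polynomial.map_C, Polynomial.map_X]
    norm_num
  have hqR : q = R := by
    have := Polynomial.map_injective (algebraMap ℝ ℂ) (algebraMap ℝ ℂ).injective
    apply this
    rw [hmapR]
  have hRex : R = Polynomial.C (ω 4) * X ^ 4 + Polynomial.C (ω 4 * (b + d)) * X ^ 3 +
      Polynomial.C (ω 4 * (c + e + b * d)) * X ^ 2 +
      Polynomial.C (ω 4 * (b * e + c * d)) * X ^ 1 + Polynomial.C (ω 4 * (c * e)) * X ^ 0 := by
    rw [hR]
    simp only [map_mul, map_add]
    ring
  have hcoeffs : ∀ k (hk : k < 5), ω ⟨k, hk⟩ = R.coeff k := by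
    intro k hk
    rw [← hqR, hq, coeff_polyOfCoeffs, dif_pos hk]
  have e0 : ω 0 = ω 4 * (c * e) := by
    have := hcoeffs 0 (by norm_num)
    rw [hRex] at this
    simp only [Polynomial.coeff_add, Polynomial.coeff_C_mul, Polynomial.coeff_X_pow] at this
    norm_num at this
    convert this using 2 <;> norm_num
  have e1 : ω 1 = ω 4 * (b * e + c * d) := by
    have := hcoeffs 1 (by norm_num)
    rw [hRex] at this
    simp only [Polynomial.coeff_add, Polynomial.coeff_C_mul, Polynomial.coeff_X_pow] at this
    norm_num at this
    convert this using 2 <;> norm_num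
  have e2 : ω 2 = ω 4 * (c + e + b * d) := by
    have := hcoeffs 2 (by norm_num)
    rw [hRex] at this
    simp only [Polynomial.coeff_add, Polynomial.coeff_C_mul, Polynomial.coeff_X_pow] at this
    norm_num at this
    convert this using 2 <;> norm_num <;> rfl
  have e3 : ω 3 = ω 4 * (b + d) := by
    have := hcoeffs 3 (by norm_num)
    rw [hRex] at this
    simp only [Polynomial.coeff_add, Polynomial.coeff_C_mul, Polynomial.coeff_X_pow] at this
    norm_num at this
    convert this using 2 <;> norm_num <;> rfl
  have hsq : 0 < ω 4 * ω 4 := by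
    rcases hω4.lt_or_gt with h | h
    · exact mul_pos_of_neg_of_neg h h
    · exact mul_pos h h
  refine ⟨?_, ?_, ?_⟩
  · intro i
    fin_cases i
    · show (0:ℝ) < ω 0 * ω 4
      rw [e0]; nlinarith [mul_pos hsq (mul_pos hc he)]
    · show (0:ℝ) < ω 1 * ω 4
      rw [e1]; nlinarith [mul_pos hsq (add_pos (mul_pos hb he) (mul_pos hc hd))]
    · show (0:ℝ) < ω 2 * ω 4
      rw [e2]; nlinarith [mul_pos hsq (add_pos (add_pos hc he) (mul_pos hb hd))]
    · show (0:ℝ) < ω 3 * ω 4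
      rw [e3]; nlinarith [mul_pos hsq (add_pos hb hd)]
    · exact hsq
  · have key : 0 < (c + e + b * d) * (b + d) - (b * e + c * d) := by
      nlinarith [mul_pos hb hc, mul_pos (mul_pos hb hb) hd, mul_pos hd he,
        mul_pos (mul_pos hb hd) hd]
    rw [e1, e2, e3]
    have H := mul_pos hsq key
    have hid : ω 4 * (c + e + b * d) * (ω 4 * (b + d)) - ω 4 * (b * e + c * d) * ω 4
        = ω 4 * ω 4 * ((c + e + b * d) * (b + d) - (b * e + c * d)) := by ring
    linarith [H, hid]
  · have key : 0 < (b * e + c * d) * (c + e + b * d) - (c * e) * (b + d) := by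
      nlinarith [mul_pos hb (mul_pos he he), mul_pos (mul_pos hb hb) (mul_pos hd he),
        mul_pos (mul_pos hc hc) hd, mul_pos (mul_pos hb hc) (mul_pos hd hd)]
    rw [e0, e1, e2, e3]
    have H := mul_pos hsq key
    have hid : ω 4 * (b * e + c * d) * (ω 4 * (c + e + b * d)) - ω 4 * (c * e) * (ω 4 * (b + d))
        = ω 4 * ω 4 * ((b * e + c * d) * (c + e + b * d) - (c * e) * (b + d)) := by ring
    linarith [H, hid]

/-! ### Measure-theoretic setup -/

noncomputable def μ5 : Measure (Fin 5 → ℝ) := Measure.pi fun _ : Fin 5 => gaussianReal 0 1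

instance : IsProbabilityMeasure μ5 := by unfold μ5; infer_instance

noncomputable def τ : Equiv.Perm (Fin 5) := Equiv.swap 1 2 * Equiv.swap 3 4

def Pset : Set (Fin 5 → ℝ) := Set.univ.pi fun _ => Set.Ioi (0:ℝ)
def Nset : Set (Fin 5 → ℝ) := Set.univ.pi fun _ => Set.Iio (0:ℝ)
def Aset : Set (Fin 5 → ℝ) := {ω | ω 1 * ω 4 < ω 2 * ω 3}
def A'set : Set (Fin 5 → ℝ) := {ω | ω 2 * ω 3 < ω 1 * ω 4}
def Bset : Set (Fin 5 → ℝ) := {ω | ω 0 * ω 3 < ω 1 * ω 2}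

lemma measurable_Aset : MeasurableSet Aset :=
  measurableSet_lt ((measurable_pi_apply 1).mul (measurable_pi_apply 4))
    ((measurable_pi_apply 2).mul (measurable_pi_apply 3))

lemma measurable_A'set : MeasurableSet A'set :=
  measurableSet_lt ((measurable_pi_apply 2).mul (measurable_pi_apply 3))
    ((measurable_pi_apply 1).mul (measurable_pi_apply 4))

lemma measurable_Bset : MeasurableSet Bset :=
  measurableSet_lt ((measurable_pi_apply 0).mul (measurable_pi_apply 3))
    ((measurable_pi_apply 1).mul (measurable_pi_apply 2))

lemma measurable_Pset : MeasurableSet Pset :=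
  MeasurableSet.univ_pi fun _ => measurableSet_Ioi

lemma measurable_Nset : MeasurableSet Nset :=
  MeasurableSet.univ_pi fun _ => measurableSet_Iio

lemma μ5_Pset : μ5 Pset = 1/32 := by
  rw [μ5, Pset, Measure.pi_pi]
  simp only [gauss_Ioi]
  rw [Finset.prod_const]
  simpa using enn1

lemma μ5_Nset : μ5 Nset = 1/32 := by
  rw [μ5, Nset, Measure.pi_pi]
  simp only [gauss_Iio]
  rw [Finset.prod_const]
  simpa using enn1

lemma swap_measure (S : Set (Fin 5 → ℝ)) (hS : MeasurableSet S)
    (hSτ : ∀ ω : Fin 5 → ℝ, (fun a => ω (τ a)) ∈ S ↔ ω ∈ S) :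
    μ5 (S ∩ A'set) = μ5 (S ∩ Aset) := by
  set T := (MeasurableEquiv.piCongrLeft (fun _ : Fin 5 => ℝ) τ).symm with hT
  have mp : MeasurePreserving T μ5 μ5 :=
    (measurePreserving_piCongrLeft (fun _ : Fin 5 => gaussianReal 0 1) τ).symm _
  have happ : ∀ (ω : Fin 5 → ℝ), T ω = fun a => ω (τ a) := fun _ => rfl
  have hpre : T ⁻¹' (S ∩ Aset) = S ∩ A'set := by
    ext ω
    simp only [Set.mem_preimage, Set.mem_inter_iff, happ]
    constructor
    · rintro ⟨h1, h2⟩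
      refine ⟨(hSτ ω).1 h1, ?_⟩
      have ht1 : τ 1 = 2 := by decide
      have ht2 : τ 2 = 1 := by decide
      have ht3 : τ 3 = 4 := by decide
      have ht4 : τ 4 = 3 := by decide
      simp only [Aset, Set.mem_setOf_eq, ht1, ht2, ht3, ht4] at h2
      exact h2
    · rintro ⟨h1, h2⟩
      refine ⟨(hSτ ω).2 h1, ?_⟩
      have ht1 : τ 1 = 2 := by decide
      have ht2 : τ 2 = 1 := by decide
      have ht3 : τ 3 = 4 := by decide
      have ht4 : τ 4 = 3 := by decide
      simp only [Aset, Set.mem_setOf_eq, ht1, ht2, ht3, ht4]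
      exact h2
  rw [← hpre, mp.measure_preimage (hS.inter measurable_Aset).nullMeasurableSet]

lemma Pset_inv (ω : Fin 5 → ℝ) : (fun a => ω (τ a)) ∈ Pset ↔ ω ∈ Pset := by
  simp only [Pset, Set.mem_pi, Set.mem_univ, forall_true_left, Set.mem_Ioi, true_implies]
  constructor
  · intro h i
    have := h (τ.symm i)
    rwa [Equiv.apply_symm_apply] at this
  · intro h i
    exact h (τ i)

lemma Nset_inv (ω : Fin 5 → ℝ) : (fun a => ω (τ a)) ∈ Nset ↔ ω ∈ Nset := by
  simp only [Nset, Set.mem_pi, Set.mem_univ, forall_true_left, Set.mem_Iio, true_implies]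
  constructor
  · intro h i
    have := h (τ.symm i)
    rwa [Equiv.apply_symm_apply] at this
  · intro h i
    exact h (τ i)

lemma half_bound (S : Set (Fin 5 → ℝ)) (hS : MeasurableSet S)
    (hSτ : ∀ ω : Fin 5 → ℝ, (fun a => ω (τ a)) ∈ S ↔ ω ∈ S)
    (hmeasS : μ5 S = 1/32) : μ5 (S ∩ Aset) ≤ 1/64 := by
  have hdisj : Disjoint (S ∩ Aset) (S ∩ A'set) := by
    rw [Set.disjoint_left]
    rintro ω ⟨-, h1⟩ ⟨-, h2⟩
    simp only [Aset, Set.mem_setOf_eq] at h1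
    simp only [A'set, Set.mem_setOf_eq] at h2
    linarith
  have hsum : μ5 (S ∩ Aset) + μ5 (S ∩ A'set) ≤ 1/32 := by
    rw [← measure_union hdisj (hS.inter measurable_A'set), ← hmeasS]
    exact measure_mono (by intro ω h; rcases h with h | h <;> exact h.1)
  rw [swap_measure S hS hSτ] at hsum
  exact enn3 _ hsum

end Stmt13Aux

open Stmt13Aux
/-- For a random real quartic polynomial with i.i.d. standard normal
coefficients, the probability that all four complex roots have negative real part is
strictly smaller than `1/32`. -/
theorem stmt_13 :
    (Measure.pi fun _ : Fin 5 => gaussianReal 0 1)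
        {ω | negRootCount (polyOfCoeffs (n := 4) ω) = 4} < 1 / 32 := by
  classical
  have hμ : (Measure.pi fun _ : Fin 5 => gaussianReal 0 1) = μ5 := rfl
  rw [hμ]
  set E : Set (Fin 5 → ℝ) := {ω | negRootCount (polyOfCoeffs (n := 4) ω) = 4} with hE
  -- the open box
  set lo : Fin 5 → ℝ := ![4, 1, 1, 1, 0] with hlo
  set hi : Fin 5 → ℝ := ![5, 2, 2, 2, 1/2] with hhi
  set U : Set (Fin 5 → ℝ) := Set.univ.pi fun i => Set.Ioo (lo i) (hi i) with hU
  have hUmeas : MeasurableSet U := MeasurableSet.univ_pi fun _ => measurableSet_Ioo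
  have hUne : μ5 U ≠ 0 := by
    rw [hU, μ5, Measure.pi_pi]
    rw [Finset.prod_ne_zero_iff]
    intro i _
    apply gauss_Ioo
    fin_cases i <;> norm_num [hlo, hhi]
  -- U facts
  have hUsub : U ⊆ Pset ∩ Aset := by
    intro ω hω
    simp only [hU, Set.mem_pi, Set.mem_univ, forall_true_left, Set.mem_Ioo, true_implies] at hω
    have h0 := hω 0; have h1 := hω 1; have h2 := hω 2; have h3 := hω 3; have h4 := hω 4
    simp only [hlo, hhi] at h0 h1 h2 h3 h4
    norm_num [Matrix.cons_val_two, Matrix.cons_val_three, Matrix.cons_val_four, Matrix.tail_cons, Matrix.head_cons] at h0 h1 h2 h3 h4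
    constructor
    · intro i _
      fin_cases i
      · show (0:ℝ) < ω 0
        linarith [h0.1]
      · show (0:ℝ) < ω 1
        linarith [h1.1]
      · show (0:ℝ) < ω 2
        linarith [h2.1]
      · show (0:ℝ) < ω 3
        linarith [h3.1]
      · show (0:ℝ) < ω 4
        linarith [h4.1]
    · show ω 1 * ω 4 < ω 2 * ω 3
      nlinarith [h1.1, h1.2, h2.1, h2.2, h3.1, h3.2, h4.1, h4.2]
  have hUdisjB : Disjoint (Pset ∩ Aset ∩ Bset) U := by
    rw [Set.disjoint_left]
    rintro ω ⟨-, hB⟩ hωU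
    simp only [hU, Set.mem_pi, Set.mem_univ, forall_true_left, Set.mem_Ioo, true_implies] at hωU
    have h0 := hωU 0; have h1 := hωU 1; have h2 := hωU 2; have h3 := hωU 3
    simp only [hlo, hhi] at h0 h1 h2 h3
    norm_num [Matrix.cons_val_two, Matrix.cons_val_three, Matrix.cons_val_four, Matrix.tail_cons, Matrix.head_cons] at h0 h1 h2 h3
    have hB' : ω 0 * ω 3 < ω 1 * ω 2 := hB
    nlinarith [h0.1, h0.2, h1.1, h1.2, h2.1, h2.2, h3.1, h3.2]
  -- event inclusion
  have hEsub : E ⊆ (Pset ∩ Aset ∩ Bset) ∪ (Nset ∩ Aset) := by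
    intro ω hω
    obtain ⟨hall, hA, hB⟩ := incl ω hω
    have hω4 : ω 4 ≠ 0 := by
      intro h0
      have := hall 4
      rw [h0] at this
      simp at this
    rcases hω4.lt_or_gt with hneg | hpos
    · right
      refine ⟨?_, hA⟩
      intro i _
      simp only [Set.mem_Iio]
      rcases mul_pos_iff.1 (hall i) with ⟨h1, h2⟩ | ⟨h1, h2⟩
      · linarith
      · exact h1
    · left
      refine ⟨⟨?_, hA⟩, hB⟩
      intro i _
      simp only [Set.mem_Ioi]
      rcases mul_pos_iff.1 (hall i) with ⟨h1, h2⟩ | ⟨h1, h2⟩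
      · exact h1
      · linarith
  -- measure bounds
  have hPA : μ5 (Pset ∩ Aset) ≤ 1/64 := half_bound Pset measurable_Pset Pset_inv μ5_Pset
  have hNA : μ5 (Nset ∩ Aset) ≤ 1/64 := half_bound Nset measurable_Nset Nset_inv μ5_Nset
  have hPAB : μ5 (Pset ∩ Aset ∩ Bset) + μ5 U ≤ 1/64 := by
    rw [← measure_union hUdisjB hUmeas]
    refine le_trans (measure_mono ?_) hPA
    intro ω h
    rcases h with h | h
    · exact h.1
    · exact hUsub h
  have hchain : μ5 E + μ5 U ≤ 1/32 := by
    calc μ5 E + μ5 U ≤ μ5 ((Pset ∩ Aset ∩ Bset) ∪ (Nset ∩ Aset)) + μ5 U :=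
          add_le_add_left (measure_mono hEsub) _
    _ ≤ (μ5 (Pset ∩ Aset ∩ Bset) + μ5 (Nset ∩ Aset)) + μ5 U :=
          add_le_add_left (measure_union_le _ _) _
    _ = (μ5 (Pset ∩ Aset ∩ Bset) + μ5 U) + μ5 (Nset ∩ Aset) := by ring
    _ ≤ 1/64 + 1/64 := add_le_add hPAB hNA
    _ = 1/32 := enn2
  have hfin : μ5 E ≠ ⊤ := measure_ne_top _ _
  calc μ5 E < μ5 E + μ5 U := ENNReal.lt_add_right hfin hUne
  _ ≤ 1/32 := hchain
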